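/- Commutation of the boost weights with the perturbed transport operator (Lemma 3.4, boost case): fix i ∈ {1,2,3} and let w(t,x,v) = t vⁱ − xⁱ v⁰ (with v⁰ = √(1+|v|²)), which is the unnormalized weight associated to the Lorentz boost Z_i = t∂_{xⁱ} + xⁱ∂_t. Then at every point (t,x,v), 𝐓_φ(w) = −𝐓(φ)·w − ( t ∂_{xⁱ}φ + xⁱ ∂_t φ ), i.e. 𝐓_φ(Z_i^α v_α) = −𝐓(φ)·Z_i^α v_α − Z_i(φ). -/

import Mathlib

noncomputable section

/-- Phase space point `(t, x, v)`. -/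
abbrev Pt : Type := ℝ × (Fin 3 → ℝ) × (Fin 3 → ℝ)

/-- `v⁰ = √(1+|v|²)`. -/
def vzero (v : Fin 3 → ℝ) : ℝ := Real.sqrt (1 + ∑ i, (v i) ^ 2)

/-- Vertical derivative `V_i f = ∂_{vⁱ} f`. -/
def Vop (i : Fin 3) (f : Pt → ℝ) (p : Pt) : ℝ :=
  fderiv ℝ f p ((0 : ℝ), (0 : Fin 3 → ℝ), Pi.single i 1)

/-- `W f = vⁱ ∂_{vⁱ} f`. -/
def Wop (f : Pt → ℝ) (p : Pt) : ℝ := ∑ i, p.2.2 i * Vop i f p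

/-- Derivative of a function of `(t,x)` in the constant spacetime direction `d`. -/
def Dphi (φ : ℝ × (Fin 3 → ℝ) → ℝ) (d : ℝ × (Fin 3 → ℝ)) (q : ℝ × (Fin 3 → ℝ)) : ℝ :=
  fderiv ℝ φ q d

/-- `𝐓(φ) = v⁰ ∂_t φ + vⁱ ∂_{xⁱ} φ`, evaluated at a phase-space point. -/
def TphiFn (φ : ℝ × (Fin 3 → ℝ) → ℝ) (p : Pt) : ℝ :=
  vzero p.2.2 * Dphi φ ((1 : ℝ), (0 : Fin 3 → ℝ)) (p.1, p.2.1) +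
    ∑ i, p.2.2 i * Dphi φ ((0 : ℝ), Pi.single i 1) (p.1, p.2.1)

/-- Free transport operator `𝐓 f = v⁰ ∂_t f + vⁱ ∂_{xⁱ} f`. -/
def Tfree (f : Pt → ℝ) (p : Pt) : ℝ :=
  vzero p.2.2 * fderiv ℝ f p ((1 : ℝ), (0 : Fin 3 → ℝ), (0 : Fin 3 → ℝ)) +
    ∑ i, p.2.2 i * fderiv ℝ f p ((0 : ℝ), Pi.single i 1, (0 : Fin 3 → ℝ))

/-- Perturbed transport operator `𝐓_φ f = 𝐓 f − (𝐓(φ) vⁱ + ∂_{xⁱ}φ) ∂_{vⁱ} f`. -/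
def Tpert (φ : ℝ × (Fin 3 → ℝ) → ℝ) (f : Pt → ℝ) (p : Pt) : ℝ :=
  Tfree f p -
    ∑ i, (TphiFn φ p * p.2.2 i + Dphi φ ((0 : ℝ), Pi.single i 1) (p.1, p.2.1)) * Vop i f p

/-- Generalized translation `𝐞_d f = ∂_d f − (∂_d φ) · vⁱ ∂_{vⁱ} f` (spacetime direction `d`). -/
def eop (φ : ℝ × (Fin 3 → ℝ) → ℝ) (d : ℝ × (Fin 3 → ℝ)) (f : Pt → ℝ) (p : Pt) : ℝ :=
  fderiv ℝ f p (d.1, d.2, (0 : Fin 3 → ℝ)) - Dphi φ d (p.1, p.2.1) * Wop f p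

/-- The coordinate direction `∂_{x^μ}`, `μ ∈ {0,1,2,3}`, with `x⁰ = t`. -/
def dir4 (μ : Fin 4) : ℝ × (Fin 3 → ℝ) :=
  if _h : (μ : ℕ) = 0 then ((1 : ℝ), (0 : Fin 3 → ℝ))
  else ((0 : ℝ), Pi.single (⟨(μ : ℕ) - 1, by have := μ.isLt; omega⟩ : Fin 3) 1)

lemma vzero_pos (v : Fin 3 → ℝ) : 0 < vzero v := Real.sqrt_pos.2 (by positivity)

lemma vzero_sq (v : Fin 3 → ℝ) : vzero v * vzero v = 1 + ∑ i, (v i)^2 :=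
  Real.mul_self_sqrt (by positivity)

lemma fderiv_w_apply (i : Fin 3) (p : Pt) (d : Pt) :
    fderiv ℝ (fun q : Pt => q.1 * q.2.2 i - q.2.1 i * vzero q.2.2) p d =
      d.1 * p.2.2 i + p.1 * d.2.2 i
        - (d.2.1 i * vzero p.2.2 + p.2.1 i * ((∑ j, p.2.2 j * d.2.2 j) / vzero p.2.2)) := by
  have hv2 : HasFDerivAt (fun q : Pt => q.2.2)
      ((ContinuousLinearMap.snd ℝ (Fin 3 → ℝ) (Fin 3 → ℝ)).comp
        (ContinuousLinearMap.snd ℝ ℝ ((Fin 3 → ℝ) × (Fin 3 → ℝ)))) p :=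
    hasFDerivAt_snd.comp p hasFDerivAt_snd
  have hx2 : HasFDerivAt (fun q : Pt => q.2.1)
      ((ContinuousLinearMap.fst ℝ (Fin 3 → ℝ) (Fin 3 → ℝ)).comp
        (ContinuousLinearMap.snd ℝ ℝ ((Fin 3 → ℝ) × (Fin 3 → ℝ)))) p :=
    hasFDerivAt_fst.comp p hasFDerivAt_snd
  have hvi := (ContinuousLinearMap.proj (R := ℝ) (φ := fun _ : Fin 3 => ℝ) i).hasFDerivAt.comp p hv2
  have hxi := (ContinuousLinearMap.proj (R := ℝ) (φ := fun _ : Fin 3 => ℝ) i).hasFDerivAt.comp p hx2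
  have hsq : HasFDerivAt (fun v : Fin 3 → ℝ => 1 + ∑ j, v j ^ 2)
      (∑ j : Fin 3, (2 * p.2.2 j) • (ContinuousLinearMap.proj j : (Fin 3 → ℝ) →L[ℝ] ℝ)) p.2.2 := by
    have h : HasFDerivAt (fun v : Fin 3 → ℝ => ∑ j, v j ^ 2)
        (∑ j : Fin 3, (2 * p.2.2 j) • (ContinuousLinearMap.proj j : (Fin 3 → ℝ) →L[ℝ] ℝ)) p.2.2 := by
      apply HasFDerivAt.fun_sum
      intro j _
      have hj := (ContinuousLinearMap.proj (R := ℝ) (φ := fun _ : Fin 3 => ℝ) j).hasFDerivAt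
        (x := p.2.2)
      simpa [pow_two, two_mul, add_smul] using hj.fun_mul hj
    simpa using h.const_add 1
  have hne : (1 + ∑ j, p.2.2 j ^ 2) ≠ 0 := by positivity
  have hvz0 : HasFDerivAt (fun v : Fin 3 → ℝ => vzero v)
      ((1 / (2 * Real.sqrt (1 + ∑ j, p.2.2 j ^ 2))) •
        (∑ j : Fin 3, (2 * p.2.2 j) • (ContinuousLinearMap.proj j : (Fin 3 → ℝ) →L[ℝ] ℝ))) p.2.2 :=
    (Real.hasDerivAt_sqrt hne).comp_hasFDerivAt p.2.2 hsq
  have hvz := hvz0.comp p hv2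
  have hw0 := ((hasFDerivAt_fst (p := p)).mul hvi).sub (hxi.mul hvz)
  have hw : HasFDerivAt (fun q : Pt => q.1 * q.2.2 i - q.2.1 i * vzero q.2.2) _ p := hw0
  rw [hw.fderiv]
  simp only [ContinuousLinearMap.sub_apply, ContinuousLinearMap.add_apply,
    ContinuousLinearMap.smul_apply, ContinuousLinearMap.coe_comp', Function.comp_apply,
    ContinuousLinearMap.coe_fst', ContinuousLinearMap.coe_snd', ContinuousLinearMap.proj_apply,
    ContinuousLinearMap.coe_sum', Finset.sum_apply, smul_eq_mul, vzero]
  have hs : Real.sqrt (1 + ∑ j, p.2.2 j ^ 2) ≠ 0 := ne_of_gt (Real.sqrt_pos.2 (by positivity))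
  field_simp
  have h2 : ∑ x, 2 * p.2.2 x * d.2.2 x = 2 * ∑ x, p.2.2 x * d.2.2 x := by
    rw [Finset.mul_sum]; exact Finset.sum_congr rfl fun j _ => by ring
  rw [h2]
  ring

lemma key_alg (i : Fin 3) (S t xi Dt : ℝ) (v D : Fin 3 → ℝ)
    (hS : S * S = 1 + ∑ j, v j ^ 2) (hSne : S ≠ 0) :
    S * v i + (∑ x : Fin 3, v x * (0 - (if i = x then 1 else 0) * S)) -
      ∑ x : Fin 3, ((S * Dt + ∑ j, v j * D j) * v x + D x) *
        ((if i = x then t else 0) - xi * ((∑ y : Fin 3, if y = x then v y else 0) / S)) =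
    -(S * Dt + ∑ j, v j * D j) * (t * v i - xi * S) - (t * D i + xi * Dt) := by
  rw [Fin.sum_univ_three] at hS
  have hinv : S * S⁻¹ = 1 := mul_inv_cancel₀ hSne
  fin_cases i <;>
    · simp [Fin.sum_univ_three]
      linear_combination (-(xi * (S * Dt + v 0 * D 0 + v 1 * D 1 + v 2 * D 2)) / S) * hS
        + (S * (v 0 * D 0 + v 1 * D 1 + v 2 * D 2) * xi + S^2 * Dt * xi - Dt * xi) * hinv

/-- Lemma 3.4, boost case: for the weight `w = t vⁱ − xⁱ v⁰` associated to the boost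
`Z_i = t∂_{xⁱ} + xⁱ∂_t`, one has `𝐓_φ(w) = −𝐓(φ)·w − Z_i(φ)`. -/
theorem Tpert_boost_weight
    (φ : ℝ × (Fin 3 → ℝ) → ℝ) (hφ : ContDiff ℝ (⊤ : ℕ∞) φ) (i : Fin 3) (p : Pt) :
    Tpert φ (fun q => q.1 * q.2.2 i - q.2.1 i * vzero q.2.2) p =
      -TphiFn φ p * (p.1 * p.2.2 i - p.2.1 i * vzero p.2.2)
        - (p.1 * Dphi φ ((0 : ℝ), Pi.single i 1) (p.1, p.2.1)
            + p.2.1 i * Dphi φ ((1 : ℝ), (0 : Fin 3 → ℝ)) (p.1, p.2.1)) := by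

  have hSne : vzero p.2.2 ≠ 0 := ne_of_gt (vzero_pos p.2.2)
  have hS := vzero_sq p.2.2
  simp only [Tpert, Tfree, Vop, TphiFn, fderiv_w_apply, Pi.zero_apply, Pi.single_apply,
    mul_zero, zero_mul, mul_one, one_mul, add_zero, zero_add, mul_ite, mul_zero,
    Finset.sum_ite_eq, Finset.mem_univ, if_true, zero_div, sub_zero, Finset.sum_const_zero]
  exact key_alg i (vzero p.2.2) p.1 (p.2.1 i) (Dphi φ ((1:ℝ), (0 : Fin 3 → ℝ)) (p.1, p.2.1))
    p.2.2 (fun j => Dphi φ ((0:ℝ), Pi.single j 1) (p.1, p.2.1)) hS hSne
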